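/- For every q ∈ ℂ with |q| < 1, one has f(q,q⁹)·f(q³,q⁷) = χ(q)·f(−q⁵)·f(−q²⁰), where f(a,b) is Ramanujan's general theta function and χ(q) = (−q;q²)∞. -/

import Mathlib

open Complex Filter Finset Topology

set_option maxHeartbeats 1000000

/-- The `q`-Pochhammer infinite product `(a; q)∞ = ∏_{n=0}^∞ (1 - a qⁿ)`. -/
noncomputable def qPoch (a q : ℂ) : ℂ := ∏' n : ℕ, (1 - a * q ^ n)


/-- Ramanujan's general theta function `f(a,b) = ∑_{n ∈ ℤ} a^{n(n+1)/2} b^{n(n-1)/2}`. -/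
noncomputable def ramTheta (a b : ℂ) : ℂ :=
  ∑' n : ℤ, a ^ (n * (n + 1) / 2).toNat * b ^ (n * (n - 1) / 2).toNat

/-- Summability of logs of `1 + f n` for summable `f`. -/
lemma summable_log_one_add {f : ℕ → ℂ} (hf : Summable f) :
    Summable (fun j => Complex.log (1 + f j)) := by
  apply Summable.of_norm_bounded_eventually (g := fun j => 3/2 * ‖f j‖) (hf.norm.mul_left _)
  rw [Nat.cofinite_eq_atTop]
  have h0 : Tendsto (fun j => ‖f j‖) atTop (𝓝 0) := by
    simpa using hf.tendsto_atTop_zero.norm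
  have h2 : ∀ᶠ j in atTop, ‖f j‖ ≤ 1/2 :=
    h0.eventually (eventually_le_nhds (by norm_num))
  filter_upwards [h2] with j hj
  exact Complex.norm_log_one_add_half_le_self hj

lemma multipliable_one_add {f : ℕ → ℂ} (hf : Summable f) (h1 : ∀ j, 1 + f j ≠ 0) :
    Multipliable (fun j => 1 + f j) :=
  Complex.multipliable_of_summable_log (summable_log_one_add hf)

lemma tprod_one_add_ne_zero {f : ℕ → ℂ} (hf : Summable f) (h1 : ∀ j, 1 + f j ≠ 0) :
    (∏' j, (1 + f j)) ≠ 0 := by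
  have := Complex.cexp_tsum_eq_tprod (f := fun j => 1 + f j)
    (fun j => h1 j) (summable_log_one_add hf)
  have h2 := this
  rw [← h2]
  exact Complex.exp_ne_zero _

/-- Weierstrass-type inequality. -/
lemma one_sub_sum_le_prod (s : Finset ℕ) (a : ℕ → ℝ) (ha : ∀ i, 0 ≤ a i) (ha1 : ∀ i, a i ≤ 1) :
    1 - ∑ i ∈ s, a i ≤ ∏ i ∈ s, (1 - a i) := by
  induction s using Finset.cons_induction with
  | empty => simp
  | cons i s his ih =>
    rw [Finset.prod_cons, Finset.sum_cons]
    have hprod : (0:ℝ) ≤ ∏ j ∈ s, (1 - a j) :=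
      Finset.prod_nonneg (fun j _ => by linarith [ha1 j])
    have hle : ∏ j ∈ s, (1 - a j) ≤ 1 :=
      Finset.prod_le_one (fun j _ => by linarith [ha1 j]) (fun j _ => by linarith [ha j])
    nlinarith [ha i, ha1 i]

noncomputable def Pfin (Q : ℂ) (k : ℕ) : ℂ := ∏ j ∈ Finset.range k, (1 - Q ^ (j+1))

section Pfin
variable {Q : ℂ} (hQ : ‖Q‖ < 1)
include hQ

lemma norm_pow_lt_one (j : ℕ) : ‖Q ^ (j+1)‖ < 1 := by
  rw [norm_pow]
  calc ‖Q‖ ^ (j+1) ≤ ‖Q‖ ^ 1 := pow_le_pow_of_le_one (norm_nonneg _) hQ.le (by omega)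
  _ < 1 := by simpa using hQ

lemma one_sub_pow_ne_zero (j : ℕ) : 1 - Q ^ (j+1) ≠ 0 := by
  have h : ‖Q ^ (j+1)‖ < 1 := norm_pow_lt_one hQ j
  intro hc
  have : Q ^ (j+1) = 1 := by linear_combination -hc
  rw [this] at h
  simp at h

lemma Pfin_ne_zero (k : ℕ) : Pfin Q k ≠ 0 :=
  Finset.prod_ne_zero_iff.2 (fun j _ => one_sub_pow_ne_zero hQ j)

lemma summable_pow_succ : Summable (fun j : ℕ => Q ^ (j+1)) := by
  have := summable_geometric_of_norm_lt_one hQ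
  exact (summable_nat_add_iff 1).2 this

lemma multipliable_one_sub_pow : Multipliable (fun j : ℕ => 1 - Q ^ (j+1)) := by
  have := multipliable_one_add (f := fun j : ℕ => -Q ^ (j+1))
    ((summable_pow_succ hQ).neg) (fun j => by
      simpa [sub_eq_add_neg] using one_sub_pow_ne_zero hQ j)
  simpa [sub_eq_add_neg] using this

lemma tendsto_Pfin : Tendsto (Pfin Q) atTop (𝓝 (∏' j : ℕ, (1 - Q ^ (j+1)))) :=
  (multipliable_one_sub_pow hQ).hasProd.tendsto_prod_nat

lemma tprod_one_sub_pow_ne_zero : (∏' j : ℕ, (1 - Q ^ (j+1))) ≠ 0 := by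
  have := tprod_one_add_ne_zero (f := fun j : ℕ => -Q ^ (j+1))
    ((summable_pow_succ hQ).neg) (fun j => by
      simpa [sub_eq_add_neg] using one_sub_pow_ne_zero hQ j)
  simpa [sub_eq_add_neg] using this

/-- Uniform upper bound for `‖Pfin Q k‖`. -/
lemma Pfin_norm_le (k : ℕ) : ‖Pfin Q k‖ ≤ Real.exp (‖Q‖ / (1 - ‖Q‖)) := by
  have h1 : ∀ j : ℕ, ‖(1 : ℂ) - Q ^ (j+1)‖ ≤ Real.exp (‖Q‖^(j+1)) := by
    intro j
    calc ‖(1:ℂ) - Q ^ (j+1)‖ ≤ ‖(1:ℂ)‖ + ‖Q ^ (j+1)‖ := norm_sub_le _ _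
    _ = 1 + ‖Q‖^(j+1) := by simp
    _ ≤ Real.exp (‖Q‖^(j+1)) := by rw [add_comm]; exact Real.add_one_le_exp _
  calc ‖Pfin Q k‖ ≤ ∏ j ∈ range k, Real.exp (‖Q‖^(j+1)) := by
        rw [Pfin]
        exact (Finset.norm_prod_le _ _).trans (Finset.prod_le_prod (fun j _ => norm_nonneg _)
          (fun j _ => h1 j))
  _ = Real.exp (∑ j ∈ range k, ‖Q‖^(j+1)) := by rw [Real.exp_sum]
  _ ≤ Real.exp (‖Q‖ / (1 - ‖Q‖)) := by
      apply Real.exp_le_exp.2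
      have hs : Summable (fun j : ℕ => ‖Q‖^(j+1)) :=
        (summable_nat_add_iff 1).2 (summable_geometric_of_lt_one (norm_nonneg _) hQ)
      have := Summable.sum_le_tsum (range k) (fun j _ => by positivity) hs
      refine this.trans ?_
      have h2 : ∑' j : ℕ, ‖Q‖^(j+1) = ‖Q‖ / (1-‖Q‖) := by
        have : ∀ j : ℕ, ‖Q‖^(j+1) = ‖Q‖ * ‖Q‖^j := fun j => by ring
        rw [tsum_congr this, tsum_mul_left,
          tsum_geometric_of_lt_one (norm_nonneg _) hQ]
        rw [div_eq_mul_inv]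
      linarith [h2]

/-- Uniform positive lower bound for `‖Pfin Q k‖`. -/
lemma Pfin_norm_ge : ∃ ε : ℝ, 0 < ε ∧ ∀ k, ε ≤ ‖Pfin Q k‖ := by
  set t := ‖Q‖ with ht
  have ht0 : 0 ≤ t := norm_nonneg _
  have htlt : t < 1 := hQ
  have hfac0 : ∀ j : ℕ, 0 < 1 - t^(j+1) := by
    intro j
    have : t^(j+1) ≤ t^1 := pow_le_pow_of_le_one ht0 htlt.le (by omega)
    simp only [pow_one] at this
    linarith
  have hfac1 : ∀ j : ℕ, 1 - t^(j+1) ≤ 1 := fun j => by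
    have : (0:ℝ) ≤ t^(j+1) := by positivity
    linarith
  set r : ℕ → ℝ := fun k => ∏ j ∈ range k, (1 - t^(j+1)) with hr
  have hrpos : ∀ k, 0 < r k := fun k => Finset.prod_pos (fun j _ => hfac0 j)
  -- lower bound of ‖Pfin Q k‖ by r k
  have hPr : ∀ k, r k ≤ ‖Pfin Q k‖ := by
    intro k
    rw [Pfin, norm_prod]
    apply Finset.prod_le_prod (fun j _ => (hfac0 j).le)
    intro j _
    calc 1 - t^(j+1) = 1 - ‖Q^(j+1)‖ := by rw [norm_pow]
    _ ≤ ‖(1:ℂ) - Q^(j+1)‖ := by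
        have := norm_sub_norm_le (1:ℂ) (Q^(j+1))
        simpa using this
  -- choose J with small tail
  obtain ⟨J, hJ⟩ : ∃ J : ℕ, t^(J+1) * (1-t)⁻¹ ≤ 1/2 := by
    rcases eq_or_lt_of_le ht0 with h0 | h0
    · exact ⟨0, by rw [← h0]; norm_num⟩
    · obtain ⟨n, hn⟩ := exists_pow_lt_of_lt_one (show (0:ℝ) < (1-t)/2 by linarith) htlt
      refine ⟨n, ?_⟩
      have h1t : (0:ℝ) < 1 - t := by linarith
      have hle : t^(n+1) ≤ t^n := pow_le_pow_of_le_one ht0 htlt.le (by omega)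
      have h2 : t^n * (1-t)⁻¹ ≤ ((1-t)/2) * (1-t)⁻¹ :=
        mul_le_mul_of_nonneg_right hn.le (by positivity)
      have h3 : ((1-t)/2) * (1-t)⁻¹ = 1/2 := by field_simp
      have h4 : t^(n+1) * (1-t)⁻¹ ≤ t^n * (1-t)⁻¹ :=
        mul_le_mul_of_nonneg_right hle (by positivity)
      linarith
  -- tail sums are small
  have htail : ∀ k, J ≤ k → ∑ j ∈ Finset.Ico J k, t^(j+1) ≤ 1/2 := by
    intro k hk
    rw [Finset.sum_Ico_eq_sum_range]
    have hgeom : Summable (fun i : ℕ => t^(J+1) * t^i) :=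
      (summable_geometric_of_lt_one ht0 htlt).mul_left _
    calc ∑ i ∈ range (k-J), t^(J+i+1)
        = ∑ i ∈ range (k-J), t^(J+1) * t^i := by
          apply Finset.sum_congr rfl; intro i _; ring
    _ ≤ ∑' i : ℕ, t^(J+1) * t^i := Summable.sum_le_tsum _ (fun i _ => by positivity) hgeom
    _ = t^(J+1) * (1-t)⁻¹ := by
          rw [tsum_mul_left, tsum_geometric_of_lt_one ht0 htlt]
    _ ≤ 1/2 := hJ
  refine ⟨r J / 2, div_pos (hrpos J) two_pos, fun k => ?_⟩
  rcases le_or_gt k J with hkJ | hkJ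
  · -- r k ≥ r J
    have : r J ≤ r k := by
      rw [hr]
      simp only
      rw [← Finset.prod_range_mul_prod_Ico _ hkJ]
      have h1 : ∏ j ∈ Finset.Ico k J, (1 - t^(j+1)) ≤ 1 :=
        Finset.prod_le_one (fun j _ => (hfac0 j).le) (fun j _ => hfac1 j)
      nlinarith [hrpos k, Finset.prod_pos (fun j (_ : j ∈ Finset.Ico k J) => hfac0 j)]
    linarith [hPr k, hrpos J]
  · have hsplit : r k = r J * ∏ j ∈ Finset.Ico J k, (1 - t^(j+1)) := by
      rw [hr]; simp only
      rw [← Finset.prod_range_mul_prod_Ico _ hkJ.le]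
    have hw : 1 - ∑ j ∈ Finset.Ico J k, t^(j+1) ≤ ∏ j ∈ Finset.Ico J k, (1 - t^(j+1)) :=
      one_sub_sum_le_prod _ _ (fun i => by positivity) (fun i => by
        have : t^(i+1) ≤ 1 := pow_le_one₀ ht0 htlt.le
        linarith)
    have h2 : (1:ℝ)/2 ≤ ∏ j ∈ Finset.Ico J k, (1 - t^(j+1)) := by
      have := htail k hkJ.le
      linarith
    calc r J / 2 = r J * (1/2) := by ring
    _ ≤ r J * ∏ j ∈ Finset.Ico J k, (1 - t^(j+1)) := by
        apply mul_le_mul_of_nonneg_left h2 (hrpos J).le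
    _ = r k := hsplit.symm
    _ ≤ ‖Pfin Q k‖ := hPr k

end Pfin

lemma Pfin_zero (Q : ℂ) : Pfin Q 0 = 1 := by simp [Pfin]

lemma Pfin_succ (Q : ℂ) (k : ℕ) : Pfin Q (k+1) = Pfin Q k * (1 - Q ^ (k+1)) :=
  Finset.prod_range_succ _ _

/-- Gaussian-binomial-type coefficients. -/
noncomputable def bcoef (Q : ℂ) (N : ℕ) (m : ℤ) : ℂ :=
  if m.natAbs ≤ N then
    Pfin Q (2*N) / (Pfin Q ((N:ℤ)+m).toNat * Pfin Q ((N:ℤ)-m).toNat)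
  else 0

lemma bcoef_eq {Q : ℂ} {N : ℕ} {m : ℤ} {c i j : ℕ} (h : m.natAbs ≤ N)
    (hc : 2*N = c) (hi : ((N:ℤ)+m).toNat = i) (hj : ((N:ℤ)-m).toNat = j) :
    bcoef Q N m = Pfin Q c / (Pfin Q i * Pfin Q j) := by
  rw [bcoef, if_pos h, hc, hi, hj]

lemma bcoef_zero {Q : ℂ} {N : ℕ} {m : ℤ} (h : N < m.natAbs) : bcoef Q N m = 0 := by
  rw [bcoef, if_neg (by omega)]

lemma bcoef_neg (Q : ℂ) (N : ℕ) (m : ℤ) : bcoef Q N (-m) = bcoef Q N m := by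
  rw [bcoef, bcoef, Int.natAbs_neg]
  rcases le_or_gt m.natAbs N with h | h
  · rw [if_pos h, if_pos h, sub_neg_eq_add, ← sub_eq_add_neg,
      mul_comm (Pfin Q ((N:ℤ)-m).toNat)]
  · rw [if_neg (by omega), if_neg (by omega)]

lemma zpow_eq_npow (Q : ℂ) {a : ℤ} {n : ℕ} (h : a = (n:ℤ)) : Q^a = Q^n := by
  rw [h, zpow_natCast]

section rec
variable {Q : ℂ} (hQ : ‖Q‖ < 1)
include hQ

set_option maxHeartbeats 4000000 in
lemma bcoef_rec_nat (N k : ℕ) :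
    bcoef Q (N+1) (k:ℤ) = (1 + Q^(2*N+1)) * bcoef Q N k
      + Q^((N:ℤ)+1-k) * bcoef Q N ((k:ℤ)-1) + Q^((N:ℤ)+1+k) * bcoef Q N ((k:ℤ)+1) := by
  rcases lt_trichotomy k N with hk | heq | hk
  · -- interior case : k < N
    obtain ⟨d, rfl⟩ : ∃ d, N = k+d+1 := ⟨N-k-1, by omega⟩
    rw [bcoef_eq (Q := Q) (by omega) (by omega : 2*(k+d+1+1) = 2*k+d+d+1+1+1+1)
        (by omega : (((k+d+1+1:ℕ):ℤ)+k).toNat = 2*k+d+1+1)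
        (by omega : (((k+d+1+1:ℕ):ℤ)-k).toNat = d+1+1),
      bcoef_eq (Q := Q) (by omega) (by omega : 2*(k+d+1) = 2*k+d+d+1+1)
        (by omega : (((k+d+1:ℕ):ℤ)+k).toNat = 2*k+d+1)
        (by omega : (((k+d+1:ℕ):ℤ)-k).toNat = d+1),
      bcoef_eq (Q := Q) (by omega)
        (by omega : 2*(k+d+1) = 2*k+d+d+1+1)
        (by omega : (((k+d+1:ℕ):ℤ)+((k:ℤ)-1)).toNat = 2*k+d)
        (by omega : (((k+d+1:ℕ):ℤ)-((k:ℤ)-1)).toNat = d+1+1),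
      bcoef_eq (Q := Q) (by omega) (by omega : 2*(k+d+1) = 2*k+d+d+1+1)
        (by omega : (((k+d+1:ℕ):ℤ)+((k:ℤ)+1)).toNat = 2*k+d+1+1)
        (by omega : (((k+d+1:ℕ):ℤ)-((k:ℤ)+1)).toNat = d),
      zpow_eq_npow Q (by push_cast; ring : ((k+d+1:ℕ):ℤ)+1-k = ((d+1+1:ℕ):ℤ)),
      zpow_eq_npow Q (by push_cast; ring : ((k+d+1:ℕ):ℤ)+1+k = ((2*k+d+1+1:ℕ):ℤ))]
    simp only [Pfin_succ]
    have e1 : Q^(2*k+d+1) = Q^k*Q^k*Q^d*Q := by ring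
    have e2 : Q^(2*k+d+1+1) = Q^k*Q^k*Q^d*Q^2 := by ring
    have e3 : Q^(d+1) = Q^d*Q := by ring
    have e4 : Q^(d+1+1) = Q^d*Q^2 := by ring
    have e5 : Q^(2*k+d+d+1) = Q^k*Q^k*Q^d*Q^d*Q := by ring
    have e6 : Q^(2*k+d+d+1+1) = Q^k*Q^k*Q^d*Q^d*Q^2 := by ring
    have e7 : Q^(2*k+d+d+1+1+1) = Q^k*Q^k*Q^d*Q^d*Q^3 := by ring
    have e8 : Q^(2*k+d+d+1+1+1+1) = Q^k*Q^k*Q^d*Q^d*Q^4 := by ring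
    have e9 : Q^(2*(k+d+1)+1) = Q^k*Q^k*Q^d*Q^d*Q^3 := by ring
    have n1 : Pfin Q (2*k+d) ≠ 0 := Pfin_ne_zero hQ _
    have n2 : Pfin Q d ≠ 0 := Pfin_ne_zero hQ _
    have n3 : Pfin Q (2*k+d+d) ≠ 0 := Pfin_ne_zero hQ _
    have m1 : 1 - Q^k*Q^k*Q^d*Q ≠ 0 := by rw [← e1]; exact one_sub_pow_ne_zero hQ _
    have m2 : 1 - Q^k*Q^k*Q^d*Q^2 ≠ 0 := by rw [← e2]; exact one_sub_pow_ne_zero hQ _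
    have m3 : 1 - Q^d*Q ≠ 0 := by rw [← e3]; exact one_sub_pow_ne_zero hQ _
    have m4 : 1 - Q^d*Q^2 ≠ 0 := by rw [← e4]; exact one_sub_pow_ne_zero hQ _
    have m5 : 1 - Q^k*Q^k*Q^d*Q^d*Q ≠ 0 := by rw [← e5]; exact one_sub_pow_ne_zero hQ _
    have m6 : 1 - Q^k*Q^k*Q^d*Q^d*Q^2 ≠ 0 := by rw [← e6]; exact one_sub_pow_ne_zero hQ _
    have m7 : 1 - Q^k*Q^k*Q^d*Q^d*Q^3 ≠ 0 := by rw [← e7]; exact one_sub_pow_ne_zero hQ _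
    have m8 : 1 - Q^k*Q^k*Q^d*Q^d*Q^4 ≠ 0 := by rw [← e8]; exact one_sub_pow_ne_zero hQ _
    rw [e1, e2, e3, e4, e5, e6, e7, e8, e9]
    rw [mul_div_assoc', mul_div_assoc', mul_div_assoc',
      div_add_div _ _ (by apply_rules [mul_ne_zero]) (by apply_rules [mul_ne_zero]),
      div_add_div _ _ (by apply_rules [mul_ne_zero]) (by apply_rules [mul_ne_zero]),
      div_eq_div_iff (by apply_rules [mul_ne_zero]) (by apply_rules [mul_ne_zero])]
    ring
  · -- k = N
    subst heq
    rcases Nat.eq_zero_or_pos k with rfl | hN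
    · -- N = 0
      rw [bcoef_eq (Q := Q) (by omega) (by omega : 2*(0+1) = 0+1+1)
          (by omega : (((0+1:ℕ):ℤ)+((0:ℕ):ℤ)).toNat = 0+1)
          (by omega : (((0+1:ℕ):ℤ)-((0:ℕ):ℤ)).toNat = 0+1),
        bcoef_eq (Q := Q) (by omega) (by omega : 2*0 = 0)
          (by omega : (((0:ℕ):ℤ)+((0:ℕ):ℤ)).toNat = 0)
          (by omega : (((0:ℕ):ℤ)-((0:ℕ):ℤ)).toNat = 0),
        bcoef_zero (by omega), bcoef_zero (by omega),
        zpow_eq_npow Q (by norm_num : ((0:ℕ):ℤ)+1-((0:ℕ):ℤ) = ((0+1:ℕ):ℤ)),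
        zpow_eq_npow Q (by norm_num : ((0:ℕ):ℤ)+1+((0:ℕ):ℤ) = ((0+1:ℕ):ℤ))]
      simp only [Pfin_succ, Pfin_zero]
      have e1 : Q^(0+1) = Q := by ring
      have e2 : Q^(0+1+1) = Q^2 := by ring
      have m1 : 1 - Q ≠ 0 := by rw [← e1]; exact one_sub_pow_ne_zero hQ _
      have m2 : 1 - Q^2 ≠ 0 := by rw [← e2]; exact one_sub_pow_ne_zero hQ _
      rw [e1, e2]
      field_simp
      ring
    · obtain ⟨n, rfl⟩ : ∃ n, k = n+1 := ⟨k-1, by omega⟩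
      rw [bcoef_eq (Q := Q) (by omega) (by omega : 2*(n+1+1) = 2*n+1+1+1+1)
          (by omega : (((n+1+1:ℕ):ℤ)+((n+1:ℕ):ℤ)).toNat = 2*n+1+1+1)
          (by omega : (((n+1+1:ℕ):ℤ)-((n+1:ℕ):ℤ)).toNat = 0+1),
        bcoef_eq (Q := Q) (by omega) (by omega : 2*(n+1) = 2*n+1+1)
          (by omega : (((n+1:ℕ):ℤ)+((n+1:ℕ):ℤ)).toNat = 2*n+1+1)
          (by omega : (((n+1:ℕ):ℤ)-((n+1:ℕ):ℤ)).toNat = 0),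
        bcoef_eq (Q := Q) (by omega)
          (by omega : 2*(n+1) = 2*n+1+1)
          (by omega : (((n+1:ℕ):ℤ)+(((n+1:ℕ):ℤ)-1)).toNat = 2*n+1)
          (by omega : (((n+1:ℕ):ℤ)-(((n+1:ℕ):ℤ)-1)).toNat = 0+1),
        bcoef_zero (by omega),
        zpow_eq_npow Q (by push_cast; ring : ((n+1:ℕ):ℤ)+1-((n+1:ℕ):ℤ) = ((0+1:ℕ):ℤ)),
        zpow_eq_npow Q (by push_cast; ring : ((n+1:ℕ):ℤ)+1+((n+1:ℕ):ℤ) = ((2*n+1+1+1:ℕ):ℤ))]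
      simp only [Pfin_succ, Pfin_zero]
      have e1 : Q^(2*n+1) = Q^n*Q^n*Q := by ring
      have e2 : Q^(2*n+1+1) = Q^n*Q^n*Q^2 := by ring
      have e3 : Q^(2*n+1+1+1) = Q^n*Q^n*Q^3 := by ring
      have e4 : Q^(2*n+1+1+1+1) = Q^n*Q^n*Q^4 := by ring
      have e5 : Q^(0+1) = Q := by ring
      have e9 : Q^(2*(n+1)+1) = Q^n*Q^n*Q^3 := by ring
      have n1 : Pfin Q (2*n) ≠ 0 := Pfin_ne_zero hQ _
      have m1 : 1 - Q^n*Q^n*Q ≠ 0 := by rw [← e1]; exact one_sub_pow_ne_zero hQ _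
      have m2 : 1 - Q^n*Q^n*Q^2 ≠ 0 := by rw [← e2]; exact one_sub_pow_ne_zero hQ _
      have m3 : 1 - Q^n*Q^n*Q^3 ≠ 0 := by rw [← e3]; exact one_sub_pow_ne_zero hQ _
      have m4 : 1 - Q^n*Q^n*Q^4 ≠ 0 := by rw [← e4]; exact one_sub_pow_ne_zero hQ _
      have m5 : 1 - Q ≠ 0 := by rw [← e5]; exact one_sub_pow_ne_zero hQ _
      rw [e1, e2, e3, e4, e5, e9]
      rw [mul_zero, add_zero, mul_div_assoc', mul_div_assoc',
        div_add_div _ _ (by apply_rules [mul_ne_zero, one_ne_zero])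
          (by apply_rules [mul_ne_zero, one_ne_zero]),
        div_eq_div_iff (by apply_rules [mul_ne_zero, one_ne_zero])
          (by apply_rules [mul_ne_zero, one_ne_zero])]
      ring
  · -- k > N
    rcases eq_or_lt_of_le (by omega : N+1 ≤ k) with heq | hk2
    · -- k = N+1
      subst heq
      rw [bcoef_eq (Q := Q) (by omega) (rfl : 2*(N+1) = 2*(N+1))
          (by omega : (((N+1:ℕ):ℤ)+((N+1:ℕ):ℤ)).toNat = 2*(N+1))
          (by omega : (((N+1:ℕ):ℤ)-((N+1:ℕ):ℤ)).toNat = 0),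
        bcoef_zero (by omega),
        bcoef_eq (Q := Q) (by omega)
          (rfl : 2*N = 2*N)
          (by omega : (((N:ℕ):ℤ)+(((N+1:ℕ):ℤ)-1)).toNat = 2*N)
          (by omega : (((N:ℕ):ℤ)-(((N+1:ℕ):ℤ)-1)).toNat = 0),
        bcoef_zero (by omega)]
      have hz : ((N:ℤ)+1-((N+1:ℕ):ℤ)) = 0 := by push_cast; ring
      rw [hz, zpow_zero, Pfin_zero]
      have nzP : Pfin Q (2*N) ≠ 0 := Pfin_ne_zero hQ _
      have nzP2 : Pfin Q (2*(N+1)) ≠ 0 := Pfin_ne_zero hQ _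
      field_simp
      ring
    · -- k ≥ N+2
      rw [bcoef_zero (by omega), bcoef_zero (by omega),
        bcoef_zero (by omega), bcoef_zero (by omega)]
      ring
end rec

lemma bcoef_rec {Q : ℂ} (hQ : ‖Q‖ < 1) (N : ℕ) (m : ℤ) :
    bcoef Q (N+1) m = (1 + Q^(2*N+1)) * bcoef Q N m
      + Q^((N:ℤ)+1-m) * bcoef Q N (m-1) + Q^((N:ℤ)+1+m) * bcoef Q N (m+1) := by
  rcases le_or_gt 0 m with hm | hm
  · obtain ⟨k, rfl⟩ := Int.eq_ofNat_of_zero_le hm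
    exact bcoef_rec_nat hQ N k
  · obtain ⟨k, rfl⟩ : ∃ k : ℕ, m = -(k:ℤ) := ⟨m.natAbs, by omega⟩
    have h := bcoef_rec_nat hQ N k
    rw [← bcoef_neg Q (N+1) k] at h
    rw [h, bcoef_neg,
      show -(k:ℤ)-1 = -((k:ℤ)+1) by ring, bcoef_neg,
      show -(k:ℤ)+1 = -((k:ℤ)-1) by ring, bcoef_neg,
      show (N:ℤ)+1- -(k:ℤ) = (N:ℤ)+1+k by ring,
      show (N:ℤ)+1+ -(k:ℤ) = (N:ℤ)+1-k by ring]
    ring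

/-- terms of the bilateral sum -/
noncomputable def scoef (p x : ℂ) (N : ℕ) (m : ℤ) : ℂ :=
  p^(m*m) * x^m * bcoef (p^2) N m

lemma scoef_zero {p x : ℂ} {N : ℕ} {m : ℤ} (h : N < m.natAbs) : scoef p x N m = 0 := by
  simp [scoef, bcoef_zero h]

lemma scoef_summable (p x : ℂ) (N : ℕ) (c : ℂ) (e : ℤ) :
    Summable (fun m : ℤ => scoef p x N (m + e) * c) :=
  summable_of_ne_finset_zero (s := Finset.Icc (-(N:ℤ)-e) ((N:ℤ)-e))
    (fun m hm => by
      rw [scoef_zero (by simp at hm; omega), zero_mul])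

section finite
variable {p x : ℂ} (hp : ‖p‖ < 1) (hp0 : p ≠ 0) (hx : x ≠ 0)
include hp hp0 hx

lemma hQnorm : ‖(p^2 : ℂ)‖ < 1 := by
  rw [norm_pow]
  calc ‖p‖^2 ≤ ‖p‖^1 := pow_le_pow_of_le_one (norm_nonneg _) hp.le (by omega)
  _ < 1 := by simpa using hp

lemma finite_jtp (N : ℕ) :
    ∏ j ∈ Finset.range N, ((1 + x*p^(2*j+1)) * (1 + x⁻¹*p^(2*j+1)))
      = ∑' m : ℤ, scoef p x N m := by
  induction N with
  | zero =>
    rw [Finset.prod_range_zero, tsum_eq_single 0 (fun m hm => scoef_zero (by omega))]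
    norm_num [scoef, bcoef, Pfin_zero]
  | succ N ih =>
    rw [Finset.prod_range_succ, ih]
    have expand : (1 + x*p^(2*N+1)) * (1 + x⁻¹*p^(2*N+1))
        = (1 + p^(4*N+2)) + x*p^(2*N+1) + x⁻¹*p^(2*N+1) := by
      field_simp
      ring
    rw [expand, mul_add, mul_add]
    rw [← tsum_mul_right (f := fun m : ℤ => scoef p x N m) (a := 1 + p^(4*N+2)),
      ← tsum_mul_right (f := fun m : ℤ => scoef p x N m) (a := x*p^(2*N+1)),
      ← tsum_mul_right (f := fun m : ℤ => scoef p x N m) (a := x⁻¹*p^(2*N+1))]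
    -- shift the second and third sums
    have shift1 : (∑' m : ℤ, scoef p x N m * (x*p^(2*N+1)))
        = ∑' m : ℤ, scoef p x N (m-1) * (x*p^(2*N+1)) := by
      exact ((Equiv.subRight (1:ℤ)).tsum_eq
        (f := fun m : ℤ => scoef p x N m * (x*p^(2*N+1)))).symm
    have shift2 : (∑' m : ℤ, scoef p x N m * (x⁻¹*p^(2*N+1)))
        = ∑' m : ℤ, scoef p x N (m+1) * (x⁻¹*p^(2*N+1)) := by
      exact ((Equiv.addRight (1:ℤ)).tsum_eq
        (f := fun m : ℤ => scoef p x N m * (x⁻¹*p^(2*N+1)))).symm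
    rw [shift1, shift2]
    have s1 : Summable (fun m : ℤ => scoef p x N m * (1 + p^(4*N+2))) := by
      simpa using scoef_summable p x N (1 + p^(4*N+2)) 0
    have s2 : Summable (fun m : ℤ => scoef p x N (m-1) * (x*p^(2*N+1))) := by
      simpa [sub_eq_add_neg] using scoef_summable p x N (x*p^(2*N+1)) (-1)
    have s3 : Summable (fun m : ℤ => scoef p x N (m+1) * (x⁻¹*p^(2*N+1))) :=
      scoef_summable p x N (x⁻¹*p^(2*N+1)) 1
    rw [← Summable.tsum_add s1 s2, ← Summable.tsum_add (s1.add s2) s3]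
    apply tsum_congr
    intro m
    -- pointwise identity
    simp only [scoef]
    rw [bcoef_rec (hQnorm hp hp0 hx) N m]
    have zp : ∀ a b : ℤ, p^a * p^b = p^(a+b) := fun a b => (zpow_add₀ hp0 a b).symm
    have zx : ∀ a b : ℤ, x^a * x^b = x^(a+b) := fun a b => (zpow_add₀ hx a b).symm
    have hnp1 : (p : ℂ)^(4*N+2) = p^((4*(N:ℤ)+2)) := by
      rw [show (4*(N:ℤ)+2) = ((4*N+2 : ℕ) : ℤ) by push_cast; ring, zpow_natCast]
    have hnp2 : (p : ℂ)^(2*N+1) = p^((2*(N:ℤ)+1)) := by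
      rw [show (2*(N:ℤ)+1) = ((2*N+1 : ℕ) : ℤ) by push_cast; ring, zpow_natCast]
    have hQ1 : ((p:ℂ)^2)^(2*N+1) = p^((4*(N:ℤ)+2)) := by
      rw [← pow_mul, show (4*(N:ℤ)+2) = ((2*(2*N+1) : ℕ) : ℤ) by push_cast; ring,
        zpow_natCast]
    have hQ2 : ((p:ℂ)^2)^((N:ℤ)+1-m) = p^(2*((N:ℤ)+1-m)) := by
      rw [← zpow_natCast p 2, ← zpow_mul]
      norm_num
    have hQ3 : ((p:ℂ)^2)^((N:ℤ)+1+m) = p^(2*((N:ℤ)+1+m)) := by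
      rw [← zpow_natCast p 2, ← zpow_mul]
      norm_num
    have hxinv : (x : ℂ)⁻¹ = x^(-1 : ℤ) := by
      rw [zpow_neg_one]
    rw [hnp1, hnp2, hQ1, hQ2, hQ3]
    have E1 : p^(m*m) * x^m * bcoef (p^2) N m * (1 + p^(4*(N:ℤ)+2))
        = p^(m*m) * x^m * ((1 + p^(4*(N:ℤ)+2)) * bcoef (p^2) N m) := by ring
    have E2 : p^((m-1)*(m-1)) * x^(m-1) * bcoef (p^2) N (m-1) * (x*p^(2*(N:ℤ)+1))
        = p^(m*m) * x^m * (p^(2*((N:ℤ)+1-m)) * bcoef (p^2) N (m-1)) := by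
      have h1 : p^((m-1)*(m-1)) * x^(m-1) * bcoef (p^2) N (m-1) * (x*p^(2*(N:ℤ)+1))
          = (p^((m-1)*(m-1)) * p^(2*(N:ℤ)+1)) * (x^(m-1) * x) * bcoef (p^2) N (m-1) := by
        ring
      rw [h1, zp, ← zpow_add_one₀ hx,
        show (m-1)*(m-1) + (2*(N:ℤ)+1) = m*m + 2*((N:ℤ)+1-m) by ring,
        show m-1+1 = m by ring, ← zp]
      ring
    have E3 : p^((m+1)*(m+1)) * x^(m+1) * bcoef (p^2) N (m+1) * (x⁻¹*p^(2*(N:ℤ)+1))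
        = p^(m*m) * x^m * (p^(2*((N:ℤ)+1+m)) * bcoef (p^2) N (m+1)) := by
      have h1 : p^((m+1)*(m+1)) * x^(m+1) * bcoef (p^2) N (m+1) * (x⁻¹*p^(2*(N:ℤ)+1))
          = (p^((m+1)*(m+1)) * p^(2*(N:ℤ)+1)) * (x^(m+1) * x⁻¹) * bcoef (p^2) N (m+1) := by
        ring
      rw [h1, zp, ← zpow_sub_one₀ hx,
        show (m+1)*(m+1) + (2*(N:ℤ)+1) = m*m + 2*((N:ℤ)+1+m) by ring,
        show m+1-1 = m by ring, ← zp]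
      ring
    rw [E1, E2, E3]
    ring
end finite

lemma scoef_zero' {p x : ℂ} {N : ℕ} {m : ℤ} (h : N < m.natAbs) : scoef p x N m = 0 := by
  simp [scoef, bcoef, Nat.not_le.2 h]

section jtp
variable {p x : ℂ} (hp : ‖p‖ < 1) (hp0 : p ≠ 0) (hx : x ≠ 0)
include hp hp0 hx

lemma summable_px_pow : Summable (fun j : ℕ => x * p^(2*j+1)) := by
  have : ∀ j : ℕ, x * p^(2*j+1) = (x*p) * (p^2)^j := by
    intro j; rw [← pow_mul]; ring
  rw [funext this]
  exact (summable_geometric_of_norm_lt_one (hQnorm hp hp0 hx)).mul_left _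

/-- summability of the limiting theta terms, over ℕ with sign. -/
lemma summable_theta_norm : Summable (fun m : ℤ => ‖p^(m*m) * x^m‖) := by
  have key : ∀ (y : ℂ), y ≠ 0 → Summable (fun n : ℕ => ‖p^((n:ℤ)*(n:ℤ)) * y^(n:ℤ)‖) := by
    intro y hy
    apply summable_of_ratio_norm_eventually_le (r := 1/2) (by norm_num)
    have h0 : Tendsto (fun n : ℕ => ‖p‖*(‖p‖^2)^n * ‖y‖) atTop (𝓝 0) := by
      have h1 : ‖p‖^2 < 1 := by
        calc ‖p‖^2 ≤ ‖p‖^1 := pow_le_pow_of_le_one (norm_nonneg _) hp.le (by omega)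
        _ < 1 := by simpa using hp
      have := tendsto_pow_atTop_nhds_zero_of_lt_one (by positivity : (0:ℝ) ≤ ‖p‖^2) h1
      have := (this.const_mul ‖p‖).mul_const ‖y‖
      simpa using this
    have hev : ∀ᶠ n : ℕ in atTop, ‖p‖*(‖p‖^2)^n * ‖y‖ ≤ 1/2 :=
      h0.eventually (eventually_le_nhds (by norm_num))
    filter_upwards [hev] with n hn
    have hsplit : p^(((n:ℤ)+1)*((n:ℤ)+1)) * y^((n:ℤ)+1)
        = (p^((n:ℤ)*(n:ℤ)) * y^(n:ℤ)) * (p^(2*(n:ℤ)+1) * y) := by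
      rw [show ((n:ℤ)+1)*((n:ℤ)+1) = (n:ℤ)*(n:ℤ) + (2*(n:ℤ)+1) by ring,
        zpow_add₀ hp0, zpow_add_one₀ hy]
      ring
    have hcast : ((n:ℕ)+1 : ℤ) = (n:ℤ)+1 := by push_cast; ring
    rw [show (((n+1:ℕ)):ℤ) = (n:ℤ)+1 by push_cast; ring]
    rw [hsplit, norm_mul]
    rw [Real.norm_of_nonneg (by positivity), Real.norm_of_nonneg (norm_nonneg _),
      mul_comm (1/2 : ℝ)]
    apply mul_le_mul_of_nonneg_left _ (norm_nonneg _)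
    calc ‖p^(2*(n:ℤ)+1) * y‖ = ‖p‖*(‖p‖^2)^n * ‖y‖ := by
          rw [norm_mul, show (2*(n:ℤ)+1) = ((2*n+1 : ℕ) : ℤ) by push_cast; ring,
            zpow_natCast, norm_pow, ← pow_mul]
          ring
    _ ≤ 1/2 := hn
  apply Summable.of_nat_of_neg
  · simpa using key x hx
  · have := key x⁻¹ (inv_ne_zero hx)
    apply this.congr
    intro n
    congr 1
    rw [show (-(n:ℤ))*(-(n:ℤ)) = (n:ℤ)*(n:ℤ) by ring, inv_zpow, ← zpow_neg]

theorem jacobi_triple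
    (hx1 : ∀ j : ℕ, 1 + x * p^(2*j+1) ≠ 0) (hx2 : ∀ j : ℕ, 1 + x⁻¹ * p^(2*j+1) ≠ 0) :
    (∏' j : ℕ, (1 - (p^2)^(j+1))) * (∏' j : ℕ, (1 + x*p^(2*j+1)))
      * (∏' j : ℕ, (1 + x⁻¹*p^(2*j+1)))
      = ∑' m : ℤ, p^(m*m) * x^m := by
  have hQ : ‖(p^2 : ℂ)‖ < 1 := hQnorm hp hp0 hx
  have hA : Multipliable (fun j : ℕ => 1 + x*p^(2*j+1)) :=
    multipliable_one_add (summable_px_pow hp hp0 hx) hx1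
  have hB : Multipliable (fun j : ℕ => 1 + x⁻¹*p^(2*j+1)) :=
    multipliable_one_add (summable_px_pow hp hp0 (inv_ne_zero hx)) hx2
  have htwo : Tendsto (fun N : ℕ => 2*N) atTop atTop :=
    tendsto_atTop_atTop.mpr (fun b => ⟨b, fun a ha => by omega⟩)
  -- LHS limit
  have T1 : Tendsto
      (fun N : ℕ => Pfin (p^2) (2*N) * (∏ j ∈ Finset.range N, (1 + x*p^(2*j+1)))
        * (∏ j ∈ Finset.range N, (1 + x⁻¹*p^(2*j+1)))) atTop
      (𝓝 ((∏' j : ℕ, (1 - (p^2)^(j+1))) * (∏' j : ℕ, (1 + x*p^(2*j+1)))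
        * (∏' j : ℕ, (1 + x⁻¹*p^(2*j+1))))) := by
    have h := (((tendsto_Pfin hQ).comp htwo).mul hA.hasProd.tendsto_prod_nat).mul
      hB.hasProd.tendsto_prod_nat
    simp only [Function.comp_def] at h
    exact h
  -- RHS limit by dominated convergence
  obtain ⟨ε, hε, hεle⟩ := Pfin_norm_ge hQ
  set Pu := Real.exp (‖(p^2:ℂ)‖ / (1 - ‖(p^2:ℂ)‖)) with hPu
  have hPu0 : 0 < Pu := Real.exp_pos _
  set Pinf := ∏' j : ℕ, (1 - (p^2) ^ (j+1)) with hPinf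
  have hPinf : Pinf ≠ 0 := tprod_one_sub_pow_ne_zero hQ
  have T2 : Tendsto (fun N : ℕ => ∑' m : ℤ, Pfin (p^2) (2*N) * scoef p x N m)
      atTop (𝓝 (∑' m : ℤ, p^(m*m) * x^m)) := by
    apply tendsto_tsum_of_dominated_convergence
      (bound := fun m : ℤ => (Pu*Pu/(ε*ε)) * ‖p^(m*m) * x^m‖)
    · exact (summable_theta_norm hp hp0 hx).mul_left _
    · -- termwise limits
      intro m
      have hev : ∀ᶠ N : ℕ in atTop, Pfin (p^2) (2*N) * scoef p x N m
          = p^(m*m) * x^m * (Pfin (p^2) (2*N) * Pfin (p^2) (2*N)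
            / (Pfin (p^2) ((N:ℤ)+m).toNat * Pfin (p^2) ((N:ℤ)-m).toNat)) := by
        filter_upwards [eventually_ge_atTop m.natAbs] with N hN
        rw [scoef, bcoef, if_pos hN]
        ring
      rw [show (𝓝 (p^(m*m) * x^m)) = 𝓝 (p^(m*m) * x^m * ((Pinf*Pinf)/(Pinf*Pinf))) by
        rw [div_self (mul_ne_zero hPinf hPinf), mul_one]]
      apply Tendsto.congr' (EventuallyEq.symm hev)
      apply Tendsto.const_mul
      have hplus : Tendsto (fun N : ℕ => ((N:ℤ)+m).toNat) atTop atTop :=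
        tendsto_atTop_atTop.mpr (fun b => ⟨b + m.natAbs, fun a ha => by omega⟩)
      have hminus : Tendsto (fun N : ℕ => ((N:ℤ)-m).toNat) atTop atTop :=
        tendsto_atTop_atTop.mpr (fun b => ⟨b + m.natAbs, fun a ha => by omega⟩)
      have := Tendsto.div
        ((((tendsto_Pfin hQ).comp htwo)).mul (((tendsto_Pfin hQ).comp htwo)))
        ((((tendsto_Pfin hQ).comp hplus)).mul (((tendsto_Pfin hQ).comp hminus)))
        (mul_ne_zero hPinf hPinf)
      exact this
    · -- uniform bound
      apply Filter.Eventually.of_forall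
      intro N m
      rcases le_or_gt m.natAbs N with h | h
      · rw [scoef, bcoef, if_pos h]
        have hb : ‖Pfin (p^2) (2*N) * (p^(m*m) * x^m *
            (Pfin (p^2) (2*N) / (Pfin (p^2) ((N:ℤ)+m).toNat * Pfin (p^2) ((N:ℤ)-m).toNat)))‖
            = (‖Pfin (p^2) (2*N)‖ * ‖Pfin (p^2) (2*N)‖
              / (‖Pfin (p^2) ((N:ℤ)+m).toNat‖ * ‖Pfin (p^2) ((N:ℤ)-m).toNat‖))
              * ‖p^(m*m) * x^m‖ := by
          rw [show Pfin (p^2) (2*N) * (p^(m*m) * x^m *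
            (Pfin (p^2) (2*N) / (Pfin (p^2) ((N:ℤ)+m).toNat * Pfin (p^2) ((N:ℤ)-m).toNat)))
            = (Pfin (p^2) (2*N) * Pfin (p^2) (2*N)
              / (Pfin (p^2) ((N:ℤ)+m).toNat * Pfin (p^2) ((N:ℤ)-m).toNat)) * (p^(m*m) * x^m)
            by ring]
          rw [norm_mul, norm_div, norm_mul, norm_mul]
        rw [hb]
        apply mul_le_mul_of_nonneg_right _ (norm_nonneg _)
        apply div_le_div₀ (by positivity)
          (mul_le_mul (Pfin_norm_le hQ _) (Pfin_norm_le hQ _) (norm_nonneg _) hPu0.le)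
          (by positivity)
          (mul_le_mul (hεle _) (hεle _) hε.le (norm_nonneg _))
      · rw [scoef_zero' h, mul_zero]
        simp only [norm_zero]
        positivity
  -- combine
  have heq : ∀ N : ℕ, Pfin (p^2) (2*N) * (∏ j ∈ Finset.range N, (1 + x*p^(2*j+1)))
        * (∏ j ∈ Finset.range N, (1 + x⁻¹*p^(2*j+1)))
      = ∑' m : ℤ, Pfin (p^2) (2*N) * scoef p x N m := by
    intro N
    have hfj := finite_jtp hp hp0 hx N
    rw [Finset.prod_mul_distrib] at hfj
    rw [tsum_mul_left, ← hfj]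
    exact mul_assoc _ _ _
  rw [funext heq] at T1
  exact tendsto_nhds_unique T1 T2
end jtp

lemma one_add_ne {z : ℂ} (h : ‖z‖ < 1) : 1 + z ≠ 0 := by
  intro hc
  have : z = -1 := by linear_combination hc
  rw [this] at h
  simp at h

/-- the canonical products -/
noncomputable def Fprod (q : ℂ) (c r : ℕ) (s : ℂ) : ℂ := ∏' n : ℕ, (1 + s * q^(c*n+r))

section F
variable {q : ℂ} (hq : ‖q‖ < 1)
include hq

lemma norm_term_lt {c r : ℕ} (hr : 1 ≤ r) {s : ℂ} (hs : ‖s‖ ≤ 1) (n : ℕ) :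
    ‖s * q^(c*n+r)‖ < 1 := by
  rw [norm_mul, norm_pow]
  calc ‖s‖ * ‖q‖^(c*n+r) ≤ 1 * ‖q‖^(c*n+r) :=
        mul_le_mul_of_nonneg_right hs (by positivity)
  _ = ‖q‖^(c*n+r) := one_mul _
  _ ≤ ‖q‖^1 := pow_le_pow_of_le_one (norm_nonneg _) hq.le (by omega)
  _ < 1 := by simpa using hq

lemma Fprod_mult {c r : ℕ} (hc : 1 ≤ c) (hr : 1 ≤ r) {s : ℂ} (hs : ‖s‖ ≤ 1) :
    Multipliable (fun n : ℕ => 1 + s * q^(c*n+r)) := by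
  apply multipliable_one_add
  · have : ∀ n : ℕ, s * q^(c*n+r) = (s * q^r) * (q^c)^n := by
      intro n; rw [← pow_mul, pow_add]; ring
    rw [funext this]
    apply Summable.mul_left
    apply summable_geometric_of_norm_lt_one
    rw [norm_pow]
    calc ‖q‖^c ≤ ‖q‖^1 := pow_le_pow_of_le_one (norm_nonneg _) hq.le (by omega)
    _ < 1 := by simpa using hq
  · exact fun n => one_add_ne (norm_term_lt hq hr hs n)

lemma Fprod_dissect {c r : ℕ} (k : ℕ) (hc : 1 ≤ c) (hr : 1 ≤ r) (hk : 1 ≤ k)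
    {s : ℂ} (hs : ‖s‖ ≤ 1) :
    Fprod q c r s = ∏ i ∈ Finset.range k, Fprod q (c*k) (c*i+r) s := by
  haveI : NeZero k := ⟨by omega⟩
  let e : (Fin k × ℕ) ≃ ℕ :=
    (Equiv.prodComm (Fin k) ℕ).trans (Nat.divModEquiv k).symm
  have he : ∀ p : Fin k × ℕ, e p = p.2 * k + (p.1 : ℕ) := fun p => rfl
  set f : ℕ → ℂ := fun n => 1 + s * q^(c*n+r) with hf
  have hmult : Multipliable f := Fprod_mult hq hc hr hs
  have hcomp : Multipliable (f ∘ e) := (e.multipliable_iff).2 hmult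
  have hslice : ∀ i : Fin k, Multipliable (fun t : ℕ => (f ∘ e) (i, t)) := by
    intro i
    have : (fun t : ℕ => (f ∘ e) (i, t))
        = fun t : ℕ => 1 + s * q^((c*k)*t + (c*(i:ℕ)+r)) := by
      funext t
      simp only [Function.comp, he, hf]
      congr 2
      ring
    rw [this]
    exact Fprod_mult hq (Nat.mul_pos hc hk) (by omega) hs
  calc Fprod q c r s = ∏' n : ℕ, f n := rfl
  _ = ∏' p : Fin k × ℕ, (f ∘ e) p := (e.tprod_eq f).symm
  _ = ∏' (i : Fin k), ∏' (t : ℕ), (f ∘ e) (i, t) := Multipliable.tprod_prod' hcomp hslice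
  _ = ∏ i : Fin k, ∏' (t : ℕ), (f ∘ e) (i, t) := tprod_fintype _
  _ = ∏ i ∈ Finset.range k, Fprod q (c*k) (c*i+r) s := by
      rw [Finset.prod_range fun i => Fprod q (c*k) (c*i+r) s]
      apply Finset.prod_congr rfl
      intro i _
      apply tprod_congr
      intro t
      simp only [Function.comp, he, hf, Fprod]
      congr 2
      ring
end F

lemma ramTheta_zero : ramTheta 0 0 = 1 := by
  rw [ramTheta, tsum_eq_single 0 ?h]
  · norm_num
  case h =>
    intro n hn
    rcases lt_or_gt_of_ne hn with h | h
    · have h2 : 2 ≤ n*(n-1) := by nlinarith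
      have h3 : (n*(n-1)/2).toNat ≠ 0 := by
        set M := n*(n-1) with hM
        omega
      rw [zero_pow h3, mul_zero]
    · have h2 : 2 ≤ n*(n+1) := by nlinarith
      have h3 : (n*(n+1)/2).toNat ≠ 0 := by
        set M := n*(n+1) with hM
        omega
      rw [zero_pow h3, zero_mul]

lemma qPoch_zero_left (z : ℂ) : qPoch 0 z = 1 := by
  simp [qPoch]

section main
variable {q : ℂ} (hq : ‖q‖ < 1) (hq0 : q ≠ 0)
include hq hq0

lemma hpowlt (k : ℕ) (hk : 1 ≤ k) : ‖(q^k : ℂ)‖ < 1 := by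
  rw [norm_pow]
  calc ‖q‖^k ≤ ‖q‖^1 := pow_le_pow_of_le_one (norm_nonneg _) hq.le hk
  _ < 1 := by simpa using hq

lemma ram_conv (r s k : ℕ) (hrs : r + s = 10) (hk : r + 2*k = s)
    (key : ∀ (n c d : ℤ), n*(n+1) = c + c → n*(n-1) = d + d →
      (r:ℤ)*c + (s:ℤ)*d = 5*(n*n) + -((k:ℤ))*n) :
    ramTheta (q^r) (q^s) = ∑' m : ℤ, ((q^5 : ℂ))^(m*m) * ((q^k)⁻¹)^m := by
  rw [ramTheta]
  apply tsum_congr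
  intro n
  obtain ⟨c, hc⟩ := Int.even_mul_succ_self n
  obtain ⟨d, hd0⟩ := Int.even_mul_succ_self (n-1)
  have hd : n*(n-1) = d + d := by linear_combination hd0
  have hcn : 0 ≤ n*(n+1) := by
    rcases le_or_gt 0 n with h | h
    · exact mul_nonneg h (by omega)
    · nlinarith
  have hdn : 0 ≤ n*(n-1) := by
    rcases le_or_gt 1 n with h | h
    · exact mul_nonneg (by omega) (by omega)
    · nlinarith
  have hc0 : 0 ≤ c := by linarith
  have hd0' : 0 ≤ d := by linarith
  have hA : n*(n+1)/2 = c := by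
    rw [hc, show c+c = 2*c by ring]
    exact Int.mul_ediv_cancel_left c two_ne_zero
  have hB : n*(n-1)/2 = d := by
    rw [hd, show d+d = 2*d by ring]
    exact Int.mul_ediv_cancel_left d two_ne_zero
  rw [hA, hB, ← pow_mul, ← pow_mul, ← pow_add,
    ← zpow_natCast q (r * c.toNat + s * d.toNat),
    show ((q:ℂ)^5) = q^((5:ℕ):ℤ) from (zpow_natCast q 5).symm, ← zpow_mul,
    show (((q:ℂ)^k)⁻¹) = q^(-((k:ℕ):ℤ)) from by rw [← zpow_natCast q k, ← zpow_neg],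
    ← zpow_mul, ← zpow_add₀ hq0]
  congr 1
  have h1 : (c.toNat : ℤ) = c := Int.toNat_of_nonneg hc0
  have h2 : (d.toNat : ℤ) = d := Int.toNat_of_nonneg hd0'
  push_cast [h1, h2]
  exact key n c d hc hd

lemma main_ne_zero :
    ramTheta q (q ^ 9) * ramTheta (q ^ 3) (q ^ 7) =
      qPoch (-q) (q ^ 2) * qPoch (q ^ 5) (q ^ 5) * qPoch (q ^ 20) (q ^ 20) := by
  -- theta conversions
  have ram1 : ramTheta q (q^9) = ∑' m : ℤ, ((q^5 : ℂ))^(m*m) * ((q^4)⁻¹)^m := by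
    have := ram_conv hq hq0 1 9 4 (by norm_num) (by norm_num)
      (fun n c d hc hd => by push_cast; linarith)
    simpa using this
  have ram2 : ramTheta (q^3) (q^7) = ∑' m : ℤ, ((q^5 : ℂ))^(m*m) * ((q^2)⁻¹)^m :=
    ram_conv hq hq0 3 7 2 (by norm_num) (by norm_num)
      (fun n c d hc hd => by push_cast; linarith)
  -- JTP instance 1
  have hp5 : ‖(q^5:ℂ)‖ < 1 := hpowlt hq hq0 5 (by norm_num)
  have hq5 : (q^5:ℂ) ≠ 0 := pow_ne_zero _ hq0
  have hterm1 : ∀ j:ℕ, ((q:ℂ)^4)⁻¹ * (q^5)^(2*j+1) = q^(10*j+1) := by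
    intro j
    rw [← pow_mul]
    field_simp
    ring
  have hterm2 : ∀ j:ℕ, ((q:ℂ)^2)⁻¹ * (q^5)^(2*j+1) = q^(10*j+3) := by
    intro j
    rw [← pow_mul]
    field_simp
    ring
  have J1 := jacobi_triple hp5 hq5 (inv_ne_zero (pow_ne_zero 4 hq0))
    (fun j => by rw [hterm1 j]; exact one_add_ne (hpowlt hq hq0 _ (by omega)))
    (fun j => by
      rw [inv_inv, show ((q:ℂ)^4) * (q^5)^(2*j+1) = q^(10*j+9) by ring]
      exact one_add_ne (hpowlt hq hq0 _ (by omega)))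
  have J2 := jacobi_triple hp5 hq5 (inv_ne_zero (pow_ne_zero 2 hq0))
    (fun j => by rw [hterm2 j]; exact one_add_ne (hpowlt hq hq0 _ (by omega)))
    (fun j => by
      rw [inv_inv, show ((q:ℂ)^2) * (q^5)^(2*j+1) = q^(10*j+7) by ring]
      exact one_add_ne (hpowlt hq hq0 _ (by omega)))
  -- convert JTP products to Fprod
  have c10 : (∏' j:ℕ, (1 - (((q:ℂ)^5)^2)^(j+1))) = Fprod q 10 10 (-1) := by
    rw [Fprod]; exact tprod_congr fun j => by ring
  have cA1 : (∏' j:ℕ, (1 + ((q:ℂ)^4)⁻¹*(q^5)^(2*j+1))) = Fprod q 10 1 1 := by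
    rw [Fprod]; exact tprod_congr fun j => by rw [hterm1 j]; ring
  have cB1 : (∏' j:ℕ, (1 + (((q:ℂ)^4)⁻¹)⁻¹*(q^5)^(2*j+1))) = Fprod q 10 9 1 := by
    rw [Fprod]; exact tprod_congr fun j => by rw [inv_inv]; ring
  have cA2 : (∏' j:ℕ, (1 + ((q:ℂ)^2)⁻¹*(q^5)^(2*j+1))) = Fprod q 10 3 1 := by
    rw [Fprod]; exact tprod_congr fun j => by rw [hterm2 j]; ring
  have cB2 : (∏' j:ℕ, (1 + (((q:ℂ)^2)⁻¹)⁻¹*(q^5)^(2*j+1))) = Fprod q 10 7 1 := by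
    rw [Fprod]; exact tprod_congr fun j => by rw [inv_inv]; ring
  rw [c10, cA1, cB1] at J1
  rw [c10, cA2, cB2] at J2
  -- qPoch conversions
  have r1 : qPoch (-q) (q^2) = Fprod q 2 1 1 := by
    rw [qPoch, Fprod]; exact tprod_congr fun n => by ring
  have r2 : qPoch (q^5) (q^5) = Fprod q 5 5 (-1) := by
    rw [qPoch, Fprod]; exact tprod_congr fun n => by ring
  have r3 : qPoch (q^20) (q^20) = Fprod q 20 20 (-1) := by
    rw [qPoch, Fprod]; exact tprod_congr fun n => by ring
  -- dissections
  have none1 : ‖(1:ℂ)‖ ≤ 1 := by norm_num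
  have nonem1 : ‖(-1:ℂ)‖ ≤ 1 := by norm_num
  have D1 : Fprod q 2 1 1
      = Fprod q 10 1 1 * Fprod q 10 3 1 * Fprod q 10 5 1 * Fprod q 10 7 1
        * Fprod q 10 9 1 := by
    have := Fprod_dissect (q := q) hq (c := 2) (r := 1) 5
      (by norm_num) (by norm_num) (by norm_num) none1
    norm_num [Finset.prod_range_succ] at this
    rw [this]
  have D2 : Fprod q 5 5 (-1) = Fprod q 10 5 (-1) * Fprod q 10 10 (-1) := by
    have := Fprod_dissect (q := q) hq (c := 5) (r := 5) 2
      (by norm_num) (by norm_num) (by norm_num) nonem1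
    norm_num [Finset.prod_range_succ] at this
    rw [this]
  have D3 : Fprod q 10 10 (-1) = Fprod q 20 10 (-1) * Fprod q 20 20 (-1) := by
    have := Fprod_dissect (q := q) hq (c := 10) (r := 10) 2
      (by norm_num) (by norm_num) (by norm_num) nonem1
    norm_num [Finset.prod_range_succ] at this
    rw [this]
  have D4 : Fprod q 20 10 (-1) = Fprod q 10 5 (-1) * Fprod q 10 5 1 := by
    rw [Fprod, Fprod, Fprod,
      ← Multipliable.tprod_mul (Fprod_mult hq (by norm_num) (by norm_num) nonem1)
        (Fprod_mult hq (by norm_num) (by norm_num) none1)]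
    exact tprod_congr fun n => by ring
  -- put it together
  rw [ram1, ram2, ← J1, ← J2, r1, r2, r3, D1, D2, D3, D4]
  ring
end main


/-- For every `q ∈ ℂ` with `|q| < 1`,
`f(q,q⁹)·f(q³,q⁷) = χ(q)·f(−q⁵)·f(−q²⁰)`, where `χ(q) = (−q;q²)∞` and
`f(−q) = (q;q)∞ = qPoch q q`. -/
theorem statement1 (q : ℂ) (hq : ‖q‖ < 1) :
    ramTheta q (q ^ 9) * ramTheta (q ^ 3) (q ^ 7) =
      qPoch (-q) (q ^ 2) * qPoch (q ^ 5) (q ^ 5) * qPoch (q ^ 20) (q ^ 20) := by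
  by_cases hq0 : q = 0
  · subst hq0
    rw [show ((0:ℂ)^9) = 0 by norm_num, show ((0:ℂ)^3) = 0 by norm_num,
      show ((0:ℂ)^7) = 0 by norm_num, show ((0:ℂ)^5) = 0 by norm_num,
      show ((0:ℂ)^20) = 0 by norm_num, neg_zero, ramTheta_zero,
      qPoch_zero_left, qPoch_zero_left]
    norm_num
  · exact main_ne_zero (by exact hq) hq0
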